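/- Let K be a field of characteristic not 2, let a, b, c ∈ K with a ≠ 0 and suppose a = d² is a square in K. Let τ be the K-automorphism of K(x,y) with τ(x) = −x, τ(y) = (ax⁴ + bx² + c)/y. Then the fixed field K(x,y)^⟨τ⟩ is rational over K; explicitly, with X = (y + (ax⁴+bx²+c)/y)/2, Y = (y − (ax⁴+bx²+c)/y)/(2x), Z = x², one has K(x,y)^⟨τ⟩ = K(X + dZ, Y). -/

import Mathlib

open MvPolynomial IntermediateField

theorem fixed_field_thInv_II_i (K F : Type*) [Field K] [Field F]
    [Algebra K F] [Algebra (MvPolynomial (Fin 2) K) F]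
    [IsScalarTower K (MvPolynomial (Fin 2) K) F]
    [IsFractionRing (MvPolynomial (Fin 2) K) F]
    (h2 : (2 : K) ≠ 0)
    (a b c d : K) (ha : a ≠ 0) (had : a = d ^ 2)
    (x y : F)
    (hx : x = algebraMap (MvPolynomial (Fin 2) K) F (X 0))
    (hy : y = algebraMap (MvPolynomial (Fin 2) K) F (X 1))
    (τ : F ≃ₐ[K] F)
    (hτx : τ x = -x)
    (hτy : τ y = (algebraMap K F a * x ^ 4 + algebraMap K F b * x ^ 2 + algebraMap K F c) / y)
    (Xg Yg Zg : F)
    (hX : Xg = (y + (algebraMap K F a * x ^ 4 + algebraMap K F b * x ^ 2 + algebraMap K F c) / y) / 2)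
    (hY : Yg = (y - (algebraMap K F a * x ^ 4 + algebraMap K F b * x ^ 2 + algebraMap K F c) / y) / (2 * x))
    (hZ : Zg = x ^ 2) :
    fixedField (Subgroup.zpowers τ) = adjoin K {Xg + algebraMap K F d * Zg, Yg} := by
  have inj : Function.Injective (algebraMap (MvPolynomial (Fin 2) K) F) :=
    IsFractionRing.injective _ _
  have hmapK : ∀ k : K, algebraMap K F k = algebraMap (MvPolynomial (Fin 2) K) F (C k) := by
    intro k
    rw [IsScalarTower.algebraMap_apply K (MvPolynomial (Fin 2) K) F, MvPolynomial.algebraMap_eq]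
  have hx0 : x ≠ 0 := by
    intro h
    exact MvPolynomial.X_ne_zero (R := K) 0 (inj (a₁ := X 0) (a₂ := 0) (by simpa [← hx] using h))
  have hy0 : y ≠ 0 := by
    intro h
    exact MvPolynomial.X_ne_zero (R := K) 1 (inj (a₁ := X 1) (a₂ := 0) (by simpa [← hy] using h))
  have h2F : (2 : F) ≠ 0 := by
    intro h
    apply h2
    apply (algebraMap K F).injective
    rw [map_ofNat, map_zero, h]
  set f : F := algebraMap K F a * x ^ 4 + algebraMap K F b * x ^ 2 + algebraMap K F c with hf_def
  have hf0 : f ≠ 0 := by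
    intro h
    apply hy0
    apply τ.injective
    rw [hτy, h, zero_div, map_zero]
  have hτf : τ f = f := by
    rw [hf_def]
    simp only [map_add, map_mul, map_pow, hτx, AlgEquiv.commutes]
    ring
  have hffy : f / (f / y) = y := by
    field_simp
  have hτX : τ Xg = Xg := by
    rw [hX, map_div₀, map_add, map_div₀, hτf, hτy, map_ofNat, hffy, add_comm]
  have hτZ : τ Zg = Zg := by rw [hZ, map_pow, hτx]; ring
  have hτY : τ Yg = Yg := by
    rw [hY, map_div₀, map_sub, map_div₀, hτf, hτy, map_mul, map_ofNat, hτx, hffy,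
      mul_neg, div_neg, ← neg_div, neg_sub]
  set u : F := Xg + algebraMap K F d * Zg with hu
  have hτu : τ u = u := by rw [hu, map_add, map_mul, hτX, hτZ, AlgEquiv.commutes]
  have key : ∀ w : F, τ w = w → w ∈ fixedField (Subgroup.zpowers τ) := by
    intro w hw
    have hle : Subgroup.zpowers τ ≤ MulAction.stabilizer (F ≃ₐ[K] F) w :=
      Subgroup.zpowers_le.mpr (by simpa [MulAction.mem_stabilizer_iff, AlgEquiv.smul_def] using hw)
    exact fun g => hle g.2
  have hL_le : adjoin K {u, Yg} ≤ fixedField (Subgroup.zpowers τ) := by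
    apply IntermediateField.adjoin_le_iff.mpr
    rintro z hz
    rcases hz with rfl | rfl
    · exact key _ hτu
    · exact key _ hτY
  have hfix : ∀ w ∈ adjoin K {u, Yg}, τ w = w := by
    intro w hw
    have := hL_le hw ⟨τ, Subgroup.mem_zpowers τ⟩
    simpa [AlgEquiv.smul_def] using this
  set L := adjoin K {u, Yg} with hLdef
  have hu_mem : u ∈ L := subset_adjoin K _ (by simp)
  have hY_mem : Yg ∈ L := subset_adjoin K _ (by simp)
  have haF2 : algebraMap K F a = (algebraMap K F d) ^ 2 := by rw [had, map_pow]
  set D : F := Yg ^ 2 + algebraMap K F b + 2 * algebraMap K F d * u with hD_def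
  have hI : u ^ 2 - algebraMap K F c = Zg * D := by
    rw [hD_def, hu, hX, hY, hZ, hf_def, haF2]
    field_simp
    ring
  have hD : D ≠ 0 := by
    intro hD0
    have hu2 : u ^ 2 = algebraMap K F c := by
      have h' := hI
      rw [hD0, mul_zero, sub_eq_zero] at h'
      exact h'
    have h1 : y ^ 2 + f + 2 * algebraMap K F d * x ^ 2 * y = u * (2 * y) := by
      rw [hu, hX, hZ]
      field_simp
    have hE : (y ^ 2 + f + 2 * algebraMap K F d * x ^ 2 * y) ^ 2
        - 4 * algebraMap K F c * y ^ 2 = 0 := by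
      rw [h1, mul_pow, hu2]
      ring
    set Q : MvPolynomial (Fin 2) K :=
      (X 1 ^ 2 + (C a * X 0 ^ 4 + C b * X 0 ^ 2 + C c) + 2 * C d * X 0 ^ 2 * X 1) ^ 2
        - 4 * C c * X 1 ^ 2 with hQ
    have hQ0 : algebraMap (MvPolynomial (Fin 2) K) F Q = 0 := by
      rw [hQ]
      simp only [map_sub, map_add, map_mul, map_pow, map_ofNat, ← hx, ← hy,
        ← hmapK a, ← hmapK b, ← hmapK c, ← hmapK d]
      rw [hf_def] at hE
      linear_combination hE
    have hQz : Q = 0 := inj (by rw [hQ0, map_zero])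
    have hev := congrArg (MvPolynomial.aeval ![(0 : Polynomial K), Polynomial.X]) hQz
    simp only [hQ, map_sub, map_add, map_mul, map_pow, map_ofNat, aeval_C, aeval_X,
      Matrix.cons_val_zero, Matrix.cons_val_one, Matrix.head_cons, map_zero,
      Polynomial.algebraMap_eq] at hev
    have hpoly : ((Polynomial.X : Polynomial K) ^ 2 - Polynomial.C c) ^ 2 = 0 := by
      linear_combination hev
    have hXc : (Polynomial.X : Polynomial K) ^ 2 - Polynomial.C c = 0 :=
      (pow_eq_zero_iff (n := 2) (by norm_num)).mp hpoly
    have hco := congrArg (fun p => Polynomial.coeff p 2) hXc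
    simp [Polynomial.coeff_X_pow, Polynomial.coeff_C] at hco
  have hZeq : Zg = (u ^ 2 - algebraMap K F c) / D := by
    rw [hI, mul_div_cancel_right₀ _ hD]
  have h2L : (2 : F) ∈ L := by
    rw [← map_ofNat (algebraMap K F) 2]
    exact IntermediateField.algebraMap_mem L 2
  have hZmem : Zg ∈ L := by
    rw [hZeq, hD_def]
    exact div_mem (sub_mem (pow_mem hu_mem 2) (IntermediateField.algebraMap_mem L c))
      (add_mem (add_mem (pow_mem hY_mem 2) (IntermediateField.algebraMap_mem L b))
        (mul_mem (mul_mem h2L (IntermediateField.algebraMap_mem L d)) hu_mem))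
  have hXmem : Xg ∈ L := by
    have hXe : Xg = u - algebraMap K F d * Zg := by rw [hu]; ring
    rw [hXe]
    exact sub_mem hu_mem (mul_mem (IntermediateField.algebraMap_mem L d) hZmem)
  have hxnot : x ∉ L := by
    intro hxL
    have h := hfix x hxL
    rw [hτx] at h
    apply mul_ne_zero h2F hx0
    linear_combination -h
  have hSmul : ∀ p q r s : F, p ∈ L → q ∈ L → r ∈ L → s ∈ L →
      ∃ u' v', u' ∈ L ∧ v' ∈ L ∧ (p + q * x) * (r + s * x) = u' + v' * x := by
    intro p q r s hp hq hr hs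
    exact ⟨p * r + q * s * Zg, p * s + q * r,
      add_mem (mul_mem hp hr) (mul_mem (mul_mem hq hs) hZmem),
      add_mem (mul_mem hp hs) (mul_mem hq hr), by rw [hZ]; ring⟩
  have hSinv : ∀ p q : F, p ∈ L → q ∈ L →
      ∃ u' v', u' ∈ L ∧ v' ∈ L ∧ (p + q * x)⁻¹ = u' + v' * x := by
    intro p q hp hq
    by_cases hq0 : q = 0
    · refine ⟨p⁻¹, 0, inv_mem hp, zero_mem L, ?_⟩
      rw [hq0]
      simp
    have hden : p ^ 2 - q ^ 2 * Zg ≠ 0 := by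
      intro h0
      rw [hZ] at h0
      have hsplit : (p - q * x) * (p + q * x) = 0 := by linear_combination h0
      rcases mul_eq_zero.mp hsplit with h | h
      · apply hxnot
        have hxe : x = p / q := by
          field_simp
          linear_combination -h
        rw [hxe]; exact div_mem hp hq
      · apply hxnot
        have hxe : x = -(p / q) := by
          field_simp
          linear_combination h
        rw [hxe]; exact neg_mem (div_mem hp hq)
    refine ⟨p / (p ^ 2 - q ^ 2 * Zg), -q / (p ^ 2 - q ^ 2 * Zg),
      div_mem hp (sub_mem (pow_mem hp 2) (mul_mem (pow_mem hq 2) hZmem)),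
      div_mem (neg_mem hq) (sub_mem (pow_mem hp 2) (mul_mem (pow_mem hq 2) hZmem)), ?_⟩
    symm
    apply eq_inv_of_mul_eq_one_left
    rw [hZ] at hden ⊢
    field_simp
    ring
  have hy_dec : y = Xg + Yg * x := by
    rw [hX, hY]
    field_simp
    ring
  have hpolyS : ∀ p : MvPolynomial (Fin 2) K,
      ∃ u' v', u' ∈ L ∧ v' ∈ L ∧ algebraMap (MvPolynomial (Fin 2) K) F p = u' + v' * x := by
    intro p
    induction p using MvPolynomial.induction_on with
    | C k =>
      refine ⟨algebraMap K F k, 0, IntermediateField.algebraMap_mem L k, zero_mem L, ?_⟩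
      rw [← hmapK k, zero_mul, add_zero]
    | add p q ihp ihq =>
      obtain ⟨u1, v1, hu1, hv1, h1⟩ := ihp
      obtain ⟨u2, v2, hu2, hv2, h2'⟩ := ihq
      exact ⟨u1 + u2, v1 + v2, add_mem hu1 hu2, add_mem hv1 hv2, by
        rw [map_add, h1, h2']; ring⟩
    | mul_X p i ih =>
      obtain ⟨u1, v1, hu1, hv1, h1⟩ := ih
      have hi : algebraMap (MvPolynomial (Fin 2) K) F (X i) = x ∨
          algebraMap (MvPolynomial (Fin 2) K) F (X i) = y := by
        fin_cases i
        · exact Or.inl hx.symm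
        · exact Or.inr hy.symm
      rcases hi with hi | hi
      · exact ⟨v1 * Zg, u1, mul_mem hv1 hZmem, hu1, by
          rw [map_mul, h1, hi, hZ]; ring⟩
      · obtain ⟨u', v', hu', hv', h'⟩ := hSmul u1 v1 Xg Yg hu1 hv1 hXmem hY_mem
        exact ⟨u', v', hu', hv', by rw [map_mul, h1, hi, hy_dec, h']⟩
  have hall : ∀ z : F, ∃ u' v', u' ∈ L ∧ v' ∈ L ∧ z = u' + v' * x := by
    intro z
    obtain ⟨p, q, hqnz, hzeq⟩ := IsFractionRing.div_surjective (A := MvPolynomial (Fin 2) K) z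
    obtain ⟨u1, v1, hu1, hv1, h1⟩ := hpolyS p
    obtain ⟨u2, v2, hu2, hv2, h2'⟩ := hpolyS q
    obtain ⟨u3, v3, hu3, hv3, h3⟩ := hSinv u2 v2 hu2 hv2
    obtain ⟨u4, v4, hu4, hv4, h4⟩ := hSmul u1 v1 u3 v3 hu1 hv1 hu3 hv3
    refine ⟨u4, v4, hu4, hv4, ?_⟩
    rw [← hzeq, div_eq_mul_inv, h1, h2', h3, h4]
  apply le_antisymm
  · intro z hz
    obtain ⟨u', v', hu', hv', rfl⟩ := hall z
    have hτz : τ (u' + v' * x) = u' + v' * x := by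
      have := hz ⟨τ, Subgroup.mem_zpowers τ⟩
      simpa [AlgEquiv.smul_def] using this
    rw [map_add, map_mul, hfix u' hu', hfix v' hv', hτx] at hτz
    have hv0 : v' = 0 := by
      by_contra hne
      apply mul_ne_zero (mul_ne_zero h2F hne) hx0
      linear_combination -hτz
    rw [hv0, zero_mul, add_zero]
    exact hu'
  · exact hL_le
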